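/- Suppose ∫‖x‖⁴ dρ(x) < ∞, let μ : ℝ → ℝ^m be a version of the conditional expectation of x given f, let Σ : ℝ → ℝ^{m×m} be a version of the conditional covariance of x given f, and let (φ_i)_{i∈ℕ} be a Hilbert basis of L²(γ) represented by Borel functions with φ_0 γ-almost everywhere equal to the constant function 1. Define S_i ∈ ℝ^{m×m} by S_i = ∫_{ℝ^m} (x − μ(f(x)))(x − μ(f(x)))ᵀ φ_i(f(x)) dρ(x). Then the family i ↦ S_i S_i is entrywise summable and ∫_ℝ (I − Σ(y))² dγ(y) = I − 2 S_0 + Σ_{i=0}^∞ S_i S_i, where I is the m×m identity matrix. -/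

import Mathlib

open MeasureTheory

open scoped ENNReal

theorem aux_memℒp_two_condexp {α : Type*} {m m0 : MeasurableSpace α} (hm : m ≤ m0)
    {μ : Measure α} [IsFiniteMeasure μ] {g : α → ℝ} (hg : MemLp g 2 μ) :
    MemLp (μ[g|m]) 2 μ := by
  have h2 : MemLp ((condExpL2 ℝ ℝ hm (hg.toLp g) : α →₂[μ] ℝ) : α → ℝ) 2 μ := Lp.memLp _
  refine h2.ae_eq (ae_eq_condExp_of_forall_setIntegral_eq hm (hg.integrable one_le_two)
    (fun s _ _ => (h2.integrable one_le_two).integrableOn)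
    (fun s hs hμs => ?_) (aestronglyMeasurable_condExpL2 hm _))
  rw [integral_condExpL2_eq hm (hg.toLp g) hs hμs.ne]
  exact setIntegral_congr_ae (hm s hs) ((hg.coeFn_toLp).mono fun x hx _ => hx)

theorem aux_mul_memℒp {α : Type*} {m0 : MeasurableSpace α} {μ : Measure α}
    {g h : α → ℝ} {p q r : ℝ≥0∞} (hg : MemLp g q μ) (hh : MemLp h r μ)
    (hpqr : 1 / p = 1 / q + 1 / r) : MemLp (fun x => g x * h x) p μ := by
  haveI : ENNReal.HolderTriple q r p := ⟨by simpa [one_div] using hpqr.symm⟩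
  exact hh.smul hg

theorem aux_memℒp_four_condexp {α : Type*} {m m0 : MeasurableSpace α} (hm : m ≤ m0)
    {μ : Measure α} [IsProbabilityMeasure μ] {g : α → ℝ} (hg : MemLp g 4 μ) :
    MemLp (μ[g|m]) 4 μ := by
  set Y := μ[g|m] with hY
  have hq : (2:ℝ≥0∞)⁻¹ = 4⁻¹ + 4⁻¹ := by
    rw [← two_mul]
    rw [show (4:ℝ≥0∞) = 2*2 by norm_num, ENNReal.mul_inv (by norm_num) (by norm_num),
      ← mul_assoc, ENNReal.mul_inv_cancel (by norm_num) (by norm_num), one_mul]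
  have hg2 : MemLp g 2 μ := hg.mono_exponent (by norm_num)
  have hY2 : MemLp Y 2 μ := aux_memℒp_two_condexp hm hg2
  have hYsm : StronglyMeasurable[m] Y := stronglyMeasurable_condExp
  have hYsm0 : AEStronglyMeasurable Y μ := (hYsm.mono hm).aestronglyMeasurable
  have hgsq : MemLp (fun x => g x * g x) 2 μ :=
    aux_mul_memℒp hg hg (by simpa using hq)
  have hYg_int : Integrable (Y * g) μ :=
    memLp_one_iff_integrable.mp (aux_mul_memℒp hY2 hg2 (by simp [ENNReal.inv_two_add_inv_two]))
  have hYsq_int : Integrable (fun x => Y x * Y x) μ :=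
    memLp_one_iff_integrable.mp (aux_mul_memℒp hY2 hY2 (by simp [ENNReal.inv_two_add_inv_two]))
  have hg_int : Integrable g μ := hg2.integrable one_le_two
  have hgsq_int : Integrable (fun x => g x * g x) μ := hgsq.integrable one_le_two
  have e1 : μ[Y * g|m] =ᵐ[μ] Y * Y :=
    (condExp_mul_of_stronglyMeasurable_left hYsm hYg_int hg_int).trans
      (by filter_upwards [] with x; rfl)
  have e2 : μ[fun x => Y x * Y x|m] = fun x => Y x * Y x :=
    condExp_of_stronglyMeasurable hm (hYsm.mul hYsm) hYsq_int
  have efun : (fun x => (g x - Y x) * (g x - Y x))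
      = (fun x => g x * g x) - (2 : ℝ) • (Y * g) + fun x => Y x * Y x := by
    funext x; simp only [Pi.add_apply, Pi.sub_apply, Pi.smul_apply, Pi.mul_apply,
      smul_eq_mul]; ring
  have e3 : μ[fun x => (g x - Y x) * (g x - Y x)|m]
      =ᵐ[μ] fun x => (μ[fun x => g x * g x|m]) x - Y x * Y x := by
    rw [efun]
    have h1 := condExp_add (m := m)
      (hgsq_int.sub (hYg_int.smul (2:ℝ))) hYsq_int
    have h2 := condExp_sub (m := m) hgsq_int (hYg_int.smul (2:ℝ))
    have h3 := condExp_smul (μ := μ) (m := m) (2 : ℝ) (Y * g)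
    rw [e2] at h1
    filter_upwards [h1, h2, h3, e1] with x h1x h2x h3x e1x
    simp only [Pi.add_apply, Pi.sub_apply, Pi.smul_apply, Pi.mul_apply, smul_eq_mul] at *
    rw [h1x, h2x, h3x, e1x]; ring
  have key : ∀ᵐ x ∂μ, Y x * Y x ≤ (μ[fun x => g x * g x|m]) x := by
    have h0 : (0 : α → ℝ) ≤ᵐ[μ] μ[fun x => (g x - Y x) * (g x - Y x)|m] :=
      condExp_nonneg (Filter.Eventually.of_forall fun x => mul_self_nonneg _)
    filter_upwards [h0, e3] with x h0x e3x
    rw [e3x] at h0x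
    simpa using h0x
  have hEg2 : MemLp (μ[fun x => g x * g x|m]) 2 μ := aux_memℒp_two_condexp hm hgsq
  have hYsq : MemLp (fun x => Y x * Y x) 2 μ := by
    refine MemLp.of_le hEg2 (hYsm0.mul hYsm0) ?_
    filter_upwards [key] with x hx
    rw [Real.norm_eq_abs, Real.norm_eq_abs, abs_of_nonneg (mul_self_nonneg _)]
    exact hx.trans (le_abs_self _)
  have hiff := memLp_norm_rpow_iff (p := 4) (q := (2:ℝ≥0∞)) hYsm0 (by norm_num) (by norm_num)
  rw [show (4:ℝ≥0∞)/2 = 2 by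
    rw [show (4:ℝ≥0∞) = 2*2 by norm_num]
    rw [mul_div_assoc, ENNReal.div_self (by norm_num) (by norm_num), mul_one]] at hiff
  refine hiff.mp ?_
  have heq : (fun x => ‖Y x‖ ^ ((2:ℝ≥0∞)).toReal) = fun x => Y x * Y x := by
    funext x
    rw [show ((2:ℝ≥0∞)).toReal = (2:ℝ) by simp]
    rw [show ((2:ℝ)) = ((2:ℕ):ℝ) by norm_num, Real.rpow_natCast]
    simp [pow_two, Real.norm_eq_abs, abs_mul_abs_self]
  rw [heq]; exact hYsq

/-- If `∫ ‖x‖⁴ dρ < ∞`, `μ` is a version of the conditional expectation of `x`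
given `f`, `S` is a version of the conditional covariance of `x` given `f`, and `(φ i)` is a
Hilbert basis of `L²(γ)` represented by Borel functions with `φ 0 = 1` γ-a.e., then the
matrices `C i` with `(C i) p q = ∫ (x p − μ (f x) p)(x q − μ (f x) q) φ i (f x) dρ` satisfy:
`i ↦ (C i) * (C i)` is entrywise summable and, entrywise,
`∫ (I − S y)² dγ = I − 2 C 0 + ∑' i, (C i) * (C i)`. -/
theorem stmt7 (m : ℕ) (hm : 1 ≤ m)
    (ρ : Measure (EuclideanSpace ℝ (Fin m))) [IsProbabilityMeasure ρ]
    (f : EuclideanSpace ℝ (Fin m) → ℝ) (hf : Measurable f)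
    (γ : Measure ℝ) (hγ : γ = Measure.map f ρ)
    (hx4 : Integrable (fun x => ‖x‖ ^ 4) ρ)
    (μ : ℝ → EuclideanSpace ℝ (Fin m)) (hμ : Measurable μ)
    (hcond : ∀ j : Fin m,
      (fun x => μ (f x) j) =ᵐ[ρ] ρ[fun x => x j | MeasurableSpace.comap f (borel ℝ)])
    (S : ℝ → Matrix (Fin m) (Fin m) ℝ)
    (hSmeas : ∀ p q : Fin m, Measurable (fun y => S y p q))
    (hcov : ∀ p q : Fin m,
      (fun x => S (f x) p q) =ᵐ[ρ]
        ρ[fun x => (x p - μ (f x) p) * (x q - μ (f x) q) |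
          MeasurableSpace.comap f (borel ℝ)])
    (φ : ℕ → ℝ → ℝ) (hφmeas : ∀ i, Measurable (φ i))
    (hφ : ∀ i, MemLp (φ i) 2 γ)
    (b : HilbertBasis ℕ ℝ (Lp ℝ 2 γ))
    (hb : ∀ i, (b i : Lp ℝ 2 γ) = (hφ i).toLp (φ i))
    (hφ0 : φ 0 =ᵐ[γ] fun _ => (1 : ℝ))
    (C : ℕ → Matrix (Fin m) (Fin m) ℝ)
    (hC : ∀ i (p q : Fin m),
      C i p q = ∫ x, (x p - μ (f x) p) * (x q - μ (f x) q) * φ i (f x) ∂ρ) :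
    ∀ p q : Fin m,
      Summable (fun i => (C i * C i) p q) ∧
      ∫ y, ((1 - S y) * (1 - S y)) p q ∂γ =
        (1 : Matrix (Fin m) (Fin m) ℝ) p q - 2 * C 0 p q + ∑' i, (C i * C i) p q := by
  have hborel : borel ℝ = (inferInstance : MeasurableSpace ℝ) := BorelSpace.measurable_eq.symm
  have hM : MeasurableSpace.comap f (borel ℝ)
      ≤ (inferInstance : MeasurableSpace (EuclideanSpace ℝ (Fin m))) := by
    rw [hborel]; exact hf.comap_le
  haveI : IsProbabilityMeasure γ := by
    rw [hγ]; exact Measure.isProbabilityMeasure_map hf.aemeasurable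
  have hq4 : (1:ℝ≥0∞)/2 = 1/4 + 1/4 := by
    simp only [one_div]
    rw [← two_mul, show (4:ℝ≥0∞) = 2*2 by norm_num,
      ENNReal.mul_inv (by norm_num) (by norm_num),
      ← mul_assoc, ENNReal.mul_inv_cancel (by norm_num) (by norm_num), one_mul]
  have hq2 : (1:ℝ≥0∞)/1 = 1/2 + 1/2 := by simp [ENNReal.inv_two_add_inv_two]
  -- coordinates in L⁴
  have hid4 : MemLp (fun x : EuclideanSpace ℝ (Fin m) => x) 4 ρ := by
    have hiff := memLp_norm_rpow_iff (p := 4) (q := (4:ℝ≥0∞))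
      (aestronglyMeasurable_id (μ := ρ)) (by norm_num) (by norm_num)
    rw [ENNReal.div_self (by norm_num) (by norm_num)] at hiff
    refine hiff.mp ?_
    rw [memLp_one_iff_integrable]
    have heq : (fun x : EuclideanSpace ℝ (Fin m) => ‖x‖ ^ ((4:ℝ≥0∞)).toReal)
        = fun x => ‖x‖ ^ (4:ℕ) := by
      funext x
      rw [show ((4:ℝ≥0∞)).toReal = ((4:ℕ):ℝ) by simp, Real.rpow_natCast]
    simp only [id_eq]; rw [heq]; exact hx4
  have hcoordle : ∀ (x : EuclideanSpace ℝ (Fin m)) (j : Fin m), |x j| ≤ ‖x‖ := by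
    intro x j
    rw [EuclideanSpace.norm_eq, show |x j| = Real.sqrt (‖x j‖ ^ 2) by
      rw [Real.sqrt_sq_eq_abs]; simp]
    exact Real.sqrt_le_sqrt
      (Finset.single_le_sum (f := fun i => ‖x i‖ ^ 2) (fun i _ => sq_nonneg _)
        (Finset.mem_univ j))
  have hcoord4 : ∀ j : Fin m, MemLp (fun x : EuclideanSpace ℝ (Fin m) => x j) 4 ρ := by
    intro j
    refine hid4.of_le ((EuclideanSpace.proj j : EuclideanSpace ℝ (Fin m) →L[ℝ] ℝ).continuous.aestronglyMeasurable)
      (Filter.Eventually.of_forall fun x => ?_)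
    simpa using hcoordle x j
  -- conditional expectations in L⁴
  have hμ4 : ∀ j : Fin m, MemLp (fun x => μ (f x) j) 4 ρ := fun j =>
    (aux_memℒp_four_condexp hM (hcoord4 j)).ae_eq (hcond j).symm
  have hd4 : ∀ j : Fin m, MemLp (fun x => x j - μ (f x) j) 4 ρ := fun j =>
    (hcoord4 j).sub (hμ4 j)
  have hh2 : ∀ j k : Fin m,
      MemLp (fun x => (x j - μ (f x) j) * (x k - μ (f x) k)) 2 ρ := fun j k =>
    aux_mul_memℒp (hd4 j) (hd4 k) hq4
  have hh1 : ∀ j k : Fin m,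
      Integrable (fun x => (x j - μ (f x) j) * (x k - μ (f x) k)) ρ := fun j k =>
    (hh2 j k).integrable one_le_two
  -- S in L²
  have hSρ2 : ∀ j k : Fin m, MemLp (fun x => S (f x) j k) 2 ρ := fun j k =>
    (aux_memℒp_two_condexp hM (hh2 j k)).ae_eq (hcov j k).symm
  have hS2 : ∀ j k : Fin m, MemLp (fun y => S y j k) 2 γ := by
    intro j k
    rw [hγ]
    exact (memLp_map_measure_iff ((hSmeas j k).aestronglyMeasurable)
      hf.aemeasurable).mpr (hSρ2 j k)
  have hφρ2 : ∀ i, MemLp (fun x => φ i (f x)) 2 ρ := by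
    intro i
    have h := hφ i
    rw [hγ] at h
    exact (memLp_map_measure_iff ((hφmeas i).aestronglyMeasurable) hf.aemeasurable).mp h
  -- φ i ∘ f is strongly measurable w.r.t. the comap σ-algebra
  have hfM : @Measurable _ _ (MeasurableSpace.comap f (borel ℝ)) _ f := by
    rw [hborel]
    exact Measurable.of_comap_le le_rfl
  have hφsmM : ∀ i, StronglyMeasurable[MeasurableSpace.comap f (borel ℝ)]
      fun x => φ i (f x) := fun i => ((hφmeas i).comp hfM).stronglyMeasurable
  -- key: C i j k = ∫ S * φ i dγ
  have key : ∀ (i : ℕ) (j k : Fin m), C i j k = ∫ y, S y j k * φ i y ∂γ := by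
    intro i j k
    have hint : Integrable ((fun x => φ i (f x)) *
        fun x => (x j - μ (f x) j) * (x k - μ (f x) k)) ρ := by
      have := memLp_one_iff_integrable.mp (aux_mul_memℒp (hφρ2 i) (hh2 j k) hq2)
      exact this
    have hstep := condExp_mul_of_stronglyMeasurable_left (m := MeasurableSpace.comap f (borel ℝ))
      (μ := ρ) (hφsmM i) hint (hh1 j k)
    calc C i j k
        = ∫ x, ((fun x => φ i (f x)) *
            fun x => (x j - μ (f x) j) * (x k - μ (f x) k)) x ∂ρ := by
          rw [hC i j k]
          exact integral_congr_ae (Filter.Eventually.of_forall fun x => by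
            simp only [Pi.mul_apply]; ring)
      _ = ∫ x, (ρ[(fun x => φ i (f x)) *
            fun x => (x j - μ (f x) j) * (x k - μ (f x) k)|
              MeasurableSpace.comap f (borel ℝ)]) x ∂ρ := (integral_condExp hM).symm
      _ = ∫ x, φ i (f x) * S (f x) j k ∂ρ := by
          refine integral_congr_ae (hstep.trans ?_)
          filter_upwards [hcov j k] with x hx
          simp only [Pi.mul_apply, hx]
      _ = ∫ y, φ i y * S y j k ∂γ := by
          rw [hγ]
          exact (integral_map hf.aemeasurable
            (((hφmeas i).mul (hSmeas j k)).aestronglyMeasurable)).symm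
      _ = ∫ y, S y j k * φ i y ∂γ :=
          integral_congr_ae (Filter.Eventually.of_forall fun y => mul_comm _ _)
  -- inner products with the basis
  have hinner : ∀ (i : ℕ) (j k : Fin m),
      (inner ℝ ((hS2 j k).toLp _) (b i) : ℝ) = C i j k := by
    intro i j k
    rw [key i j k, L2.inner_def]
    refine (integral_congr_ae ?_).symm
    have h1 : ((hS2 j k).toLp _ : ℝ → ℝ) =ᵐ[γ] fun y => S y j k := (hS2 j k).coeFn_toLp
    have h2 : ((b i : Lp ℝ 2 γ) : ℝ → ℝ) =ᵐ[γ] φ i := by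
      rw [hb i]; exact (hφ i).coeFn_toLp
    filter_upwards [h1, h2] with y hy1 hy2
    simp [hy1, hy2, RCLike.inner_apply, conj_trivial, mul_comm]
  have hGG : ∀ (j k j' k' : Fin m),
      (inner ℝ ((hS2 j k).toLp _) ((hS2 j' k').toLp _) : ℝ)
        = ∫ y, S y j k * S y j' k' ∂γ := by
    intro j k j' k'
    rw [L2.inner_def]
    refine integral_congr_ae ?_
    filter_upwards [(hS2 j k).coeFn_toLp, (hS2 j' k').coeFn_toLp] with y hy1 hy2
    simp [hy1, hy2, RCLike.inner_apply, conj_trivial, mul_comm]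
  have hsum2 : ∀ j k j' k' : Fin m, Summable (fun i => C i j k * C i j' k') := by
    intro j k j' k'
    refine (b.summable_inner_mul_inner ((hS2 j k).toLp _) ((hS2 j' k').toLp _)).congr
      (fun i => ?_)
    exact congrArg₂ (· * ·) (hinner i j k) ((real_inner_comm _ _).trans (hinner i j' k'))
  have htsum : ∀ j k j' k' : Fin m,
      ∑' i, C i j k * C i j' k' = ∫ y, S y j k * S y j' k' ∂γ := by
    intro j k j' k'
    rw [← hGG j k j' k', ← b.tsum_inner_mul_inner ((hS2 j k).toLp _) ((hS2 j' k').toLp _)]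
    refine tsum_congr fun i => ?_
    exact (congrArg₂ (· * ·) (hinner i j k)
      ((real_inner_comm _ _).trans (hinner i j' k'))).symm
  -- C 0 entries
  have hC0 : ∀ j k : Fin m, C 0 j k = ∫ y, S y j k ∂γ := by
    intro j k
    rw [key 0 j k]
    refine integral_congr_ae ?_
    filter_upwards [hφ0] with y hy
    rw [hy, mul_one]
  -- products of S entries integrable
  have hSS_int : ∀ j k j' k' : Fin m, Integrable (fun y => S y j k * S y j' k') γ :=
    fun j k j' k' => memLp_one_iff_integrable.mp (aux_mul_memℒp (hS2 j k) (hS2 j' k') hq2)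
  intro p q
  have hSum : Summable (fun i => (C i * C i) p q) := by
    refine (summable_sum (s := Finset.univ) (f := fun k (i : ℕ) => C i p k * C i k q)
      (fun k _ => hsum2 p k k q)).congr (fun i => ?_)
    exact (Matrix.mul_apply).symm
  refine ⟨hSum, ?_⟩
  have hrhs : ∑' i, (C i * C i) p q = ∫ y, ∑ k, S y p k * S y k q ∂γ := by
    calc ∑' i, (C i * C i) p q = ∑' i, ∑ k, C i p k * C i k q := by
          exact tsum_congr fun i => Matrix.mul_apply
      _ = ∑ k, ∑' i, C i p k * C i k q :=
          Summable.tsum_finsetSum (fun k _ => hsum2 p k k q)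
      _ = ∑ k, ∫ y, S y p k * S y k q ∂γ :=
          Finset.sum_congr rfl fun k _ => htsum p k k q
      _ = ∫ y, ∑ k, S y p k * S y k q ∂γ :=
          (integral_finset_sum _ fun k _ => hSS_int p k k q).symm
  have hexpand : ∀ y, ((1 - S y) * (1 - S y)) p q
      = (1 : Matrix (Fin m) (Fin m) ℝ) p q - S y p q - S y p q
        + ∑ k, S y p k * S y k q := by
    intro y
    have h1 : (1 - S y) * (1 - S y) = 1 - S y - S y + S y * S y := by noncomm_ring
    rw [h1]
    simp [Matrix.sub_apply, Matrix.add_apply, Matrix.mul_apply]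
  have hIS : Integrable (fun y => S y p q) γ := (hS2 p q).integrable one_le_two
  have hIsum : Integrable (fun y => ∑ k, S y p k * S y k q) γ :=
    integrable_finset_sum _ fun k _ => hSS_int p k k q
  have hIc : Integrable (fun _ : ℝ => (1 : Matrix (Fin m) (Fin m) ℝ) p q) γ :=
    integrable_const _
  have hIa : Integrable (fun y => (1 : Matrix (Fin m) (Fin m) ℝ) p q - S y p q) γ :=
    hIc.sub hIS
  have hIb : Integrable
      (fun y => (1 : Matrix (Fin m) (Fin m) ℝ) p q - S y p q - S y p q) γ := hIa.sub hIS
  calc ∫ y, ((1 - S y) * (1 - S y)) p q ∂γ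
      = ∫ y, ((1 : Matrix (Fin m) (Fin m) ℝ) p q - S y p q - S y p q
          + ∑ k, S y p k * S y k q) ∂γ := by
        exact integral_congr_ae (Filter.Eventually.of_forall fun y => hexpand y)
    _ = ((∫ _, (1 : Matrix (Fin m) (Fin m) ℝ) p q ∂γ) - (∫ y, S y p q ∂γ)
          - (∫ y, S y p q ∂γ)) + ∫ y, ∑ k, S y p k * S y k q ∂γ := by
        rw [integral_add hIb hIsum, integral_sub hIa hIS, integral_sub hIc hIS]
    _ = (1 : Matrix (Fin m) (Fin m) ℝ) p q - 2 * C 0 p q + ∑' i, (C i * C i) p q := by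
        rw [hrhs, hC0 p q, integral_const]
        simp [measure_univ]
        ring
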